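/- arXiv:2605.12893 — 4 statements merged into one kernel-verified Lean document; each statement's English description precedes it below -/
import Mathlib

section
/- Constant stack construction: for any LFPL element type A and any c ∈ ℕ, there exists a 0-stack implementation with element type A that is correct and bounded by the constant function B(n) = c; its underlying type is the c-fold tensor (1+A)^c. -/
/-! # LFPL: syntax and denotational semantics -/

/-- LFPL types: diamond, unit, sums, tensor products, linear functions, lists. -/
inductive Tp : Type
  | dia : Tp
  | unit : Tp
  | sum (A B : Tp) : Tp
  | tens (A B : Tp) : Tp
  | arr (A B : Tp) : Tp
  | list (A : Tp) : Tp

/-- Typing contexts: a list of declarations; `none` marks an unusable slot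
(used for context splitting in the affine type system). -/
abbrev Ctx := List (Option Tp)

/-- De Bruijn variable lookup. -/
inductive Lk : Ctx → Tp → Type
  | here {A : Tp} {G : Ctx} : Lk (some A :: G) A
  | there {o : Option Tp} {A : Tp} {G : Ctx} : Lk G A → Lk (o :: G) A

/-- Splitting a context into two halves (each declared variable is usable
in exactly one half): this enforces the affine discipline. -/
inductive Split : Ctx → Ctx → Ctx → Type
  | nil : Split [] [] []
  | skip {G G1 G2} : Split G G1 G2 → Split (none :: G) (none :: G1) (none :: G2)
  | left {A : Tp} {G G1 G2} : Split G G1 G2 → Split (some A :: G) (some A :: G1) (none :: G2)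
  | right {A : Tp} {G G1 G2} : Split G G1 G2 → Split (some A :: G) (none :: G1) (some A :: G2)

/-- Intrinsically typed LFPL terms: `Term G A` are the terms `M` with `G ⊢ M : A`. -/
inductive Term : Ctx → Tp → Type
  | var {G A} : Lk G A → Term G A
  | null {G} : Term G .unit
  | inj1 {G A B} : Term G A → Term G (.sum A B)
  | inj2 {G A B} : Term G B → Term G (.sum A B)
  | scase {G G1 G2 A B C} : Split G G1 G2 → Term G1 (.sum A B) →
      Term (some A :: G2) C → Term (some B :: G2) C → Term G C
  | pair {G G1 G2 A B} : Split G G1 G2 → Term G1 A → Term G2 B → Term G (.tens A B)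
  | letp {G G1 G2 A B C} : Split G G1 G2 → Term G1 (.tens A B) →
      Term (some B :: some A :: G2) C → Term G C
  | lam {G A B} : Term (some A :: G) B → Term G (.arr A B)
  | app {G G1 G2 A B} : Split G G1 G2 → Term G1 (.arr A B) → Term G2 A → Term G B
  | nil {G A} : Term G (.list A)
  | cons {G G1 G23 G2 G3 A} : Split G G1 G23 → Split G23 G2 G3 →
      Term G1 .dia → Term G2 A → Term G3 (.list A) → Term G (.list A)
  | lrec {G G1 G2 A B} : Split G G1 G2 → Term G1 (.list A) → Term G2 B →
      Term [some B, some A, some .dia] B → Term G B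

/-- Set-theoretic denotational semantics of types. -/
def Tp.sem : Tp → Type
  | .dia => Unit
  | .unit => Unit
  | .sum A B => A.sem ⊕ B.sem
  | .tens A B => A.sem × B.sem
  | .arr A B => A.sem → B.sem
  | .list A => List A.sem

/-- Denotation of contexts (environments of semantic values). -/
def CtxSem : Ctx → Type
  | [] => PUnit
  | some A :: G => Tp.sem A × CtxSem G
  | none :: G => CtxSem G

def Lk.sem : {G : Ctx} → {A : Tp} → Lk G A → CtxSem G → Tp.sem A
  | some _ :: _, _, .here, η => η.1
  | some _ :: _, _, .there l, η => Lk.sem l η.2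
  | none :: _, _, .there l, η => Lk.sem l η

def Split.sub1 : {G G1 G2 : Ctx} → Split G G1 G2 → CtxSem G → CtxSem G1
  | _, _, _, .nil, _ => PUnit.unit
  | _, _, _, .skip s, η => s.sub1 η
  | _, _, _, .left s, η => (η.1, s.sub1 η.2)
  | _, _, _, .right s, η => s.sub1 η.2

def Split.sub2 : {G G1 G2 : Ctx} → Split G G1 G2 → CtxSem G → CtxSem G2
  | _, _, _, .nil, _ => PUnit.unit
  | _, _, _, .skip s, η => s.sub2 η
  | _, _, _, .left s, η => s.sub2 η.2
  | _, _, _, .right s, η => (η.1, s.sub2 η.2)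

/-- Denotational semantics of terms.  The `cons` case ignores its diamond
argument, and the list recursor is interpreted by iteration over sequences. -/
def Term.sem : {G : Ctx} → {A : Tp} → Term G A → CtxSem G → Tp.sem A
  | _, _, .var l, η => l.sem η
  | _, _, .null, _ => ()
  | _, _, .inj1 M, η => Sum.inl (M.sem η)
  | _, _, .inj2 M, η => Sum.inr (M.sem η)
  | _, _, .scase s M N1 N2, η =>
      match M.sem (s.sub1 η) with
      | Sum.inl a => N1.sem (a, s.sub2 η)
      | Sum.inr b => N2.sem (b, s.sub2 η)
  | _, _, .pair s M1 M2, η => (M1.sem (s.sub1 η), M2.sem (s.sub2 η))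
  | _, _, .letp s M N, η => N.sem ((M.sem (s.sub1 η)).2, ((M.sem (s.sub1 η)).1, s.sub2 η))
  | _, _, .lam M, η => fun a => M.sem (a, η)
  | _, _, .app s M N, η => M.sem (s.sub1 η) (N.sem (s.sub2 η))
  | _, _, .nil, _ => []
  | _, _, .cons s1 s2 _ Mh Mt, η =>
      Mh.sem (s2.sub1 (s1.sub2 η)) :: Mt.sem (s2.sub2 (s1.sub2 η))
  | _, _, .lrec s M N1 N2, η =>
      (M.sem (s.sub1 η)).foldr (fun a b => N2.sem (b, (a, ((), PUnit.unit)))) (N1.sem (s.sub2 η))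

/-- Diamond-free types. -/
inductive DFree : Tp → Prop
  | unit : DFree .unit
  | sum {A B : Tp} : DFree A → DFree B → DFree (.sum A B)
  | tens {A B : Tp} : DFree A → DFree B → DFree (.tens A B)
/-! # Bounded stacks -/

/-- The type `L(1)` of unit lists (pools of diamonds). -/
def unitL : Tp := .list .unit

/-- `k`-fold tensor power of a type (with `T^0 = 1`). -/
def tpow (T : Tp) : ℕ → Tp
  | 0 => .unit
  | k + 1 => .tens T (tpow T k)

/-- `(L(1))^k`, the `k`-fold tensor of `L(1)`. -/
abbrev dpow (k : ℕ) : Tp := tpow unitL k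

/-- `m_{n,k} ∈ ⟦(L(1))^k⟧`: the `k`-tuple of length-`n` unit sequences. -/
def mnk (n : ℕ) : (k : ℕ) → (dpow k).sem
  | 0 => ()
  | k + 1 => (List.replicate n (), mnk n k)

/-- A `k`-stack implementation with element type `A`: a type `S` together with
closed terms `empty`, `push` and `pop` of the appropriate types. -/
structure StackImpl (A : Tp) (k : ℕ) where
  S : Tp
  empty : Term [] S
  push : Term [] (.arr (dpow k) (.arr (.tens A S) (.tens (dpow k) (.tens S (.sum A .unit)))))
  pop : Term [] (.arr (dpow k) (.arr S (.tens (dpow k) (.tens S (.sum .unit A)))))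

/-- Correctness of a `k`-stack implementation, bounded by `B : ℕ → ℕ`:
for each `n` there are valid states `valid n` and item lists `items n` such that
`empty` is valid with no items, `push` fails exactly on full stacks and otherwise
prepends the element, and `pop` fails exactly on empty stacks and otherwise
returns the head; both operations return `m_{n,k}`. -/
structure StackCorrect {A : Tp} {k : ℕ} (imp : StackImpl A k) (B : ℕ → ℕ) where
  valid : ℕ → imp.S.sem → Prop
  items : ℕ → imp.S.sem → List A.sem
  empty_valid : ∀ n, valid n (imp.empty.sem PUnit.unit)
  empty_items : ∀ n, items n (imp.empty.sem PUnit.unit) = []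
  push_full : ∀ (n : ℕ) (x : A.sem) (s : imp.S.sem), valid n s →
    (items n s).length = B n →
    imp.push.sem PUnit.unit (mnk n k) (x, s) = (mnk n k, (s, Sum.inl x))
  push_succ : ∀ (n : ℕ) (x : A.sem) (s : imp.S.sem), valid n s →
    (items n s).length < B n →
    ∃ s', imp.push.sem PUnit.unit (mnk n k) (x, s) = (mnk n k, (s', Sum.inr ())) ∧
      valid n s' ∧ items n s' = x :: items n s
  pop_empty : ∀ (n : ℕ) (s : imp.S.sem), valid n s → items n s = [] →
    imp.pop.sem PUnit.unit (mnk n k) s = (mnk n k, (s, Sum.inl ()))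
  pop_succ : ∀ (n : ℕ) (s : imp.S.sem) (x : A.sem) (l : List A.sem), valid n s →
    items n s = x :: l →
    ∃ s', imp.pop.sem PUnit.unit (mnk n k) s = (mnk n k, (s', Sum.inr x)) ∧
      valid n s' ∧ items n s' = l

/-! ## Thinnings (weakening) -/

inductive Thin : Ctx → Ctx → Type
  | nil : Thin [] []
  | keep {o : Option Tp} {G G' : Ctx} : Thin G G' → Thin (o :: G) (o :: G')
  | drop {o : Option Tp} {G G' : Ctx} : Thin G G' → Thin G (o :: G')

def Thin.sem : {G G' : Ctx} → Thin G G' → CtxSem G' → CtxSem G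
  | _, _, .nil, _ => PUnit.unit
  | _, _, @Thin.keep (some _) _ _ t, η => (η.1, t.sem η.2)
  | _, _, @Thin.keep none _ _ t, η => t.sem η
  | _, _, @Thin.drop (some _) _ _ t, η => t.sem η.2
  | _, _, @Thin.drop none _ _ t, η => t.sem η

def Lk.thin : {G G' : Ctx} → {A : Tp} → Thin G G' → Lk G A → Lk G' A
  | _, _, _, .keep _, .here => .here
  | _, _, _, @Thin.keep (some _) _ _ t, .there l => .there (l.thin t)
  | _, _, _, @Thin.keep none _ _ t, .there l => .there (l.thin t)
  | _, _, _, .drop t, l => .there (l.thin t)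

theorem Lk.thin_sem : {G G' : Ctx} → {A : Tp} → (t : Thin G G') → (l : Lk G A) →
    (η : CtxSem G') → (l.thin t).sem η = l.sem (t.sem η)
  | _, _, _, @Thin.keep (some _) _ _ t, .here, η => rfl
  | _, _, _, @Thin.keep (some _) _ _ t, .there l, η => Lk.thin_sem t l η.2
  | _, _, _, @Thin.keep none _ _ t, .there l, η => Lk.thin_sem t l η
  | _, _, _, @Thin.drop (some _) _ _ t, l, η => Lk.thin_sem t l η.2
  | _, _, _, @Thin.drop none _ _ t, l, η => Lk.thin_sem t l η

structure ThinSplit (G' G1 G2 : Ctx) where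
  G1' : Ctx
  G2' : Ctx
  split : Split G' G1' G2'
  t1 : Thin G1 G1'
  t2 : Thin G2 G2'

def Split.thin : {G G' G1 G2 : Ctx} → Thin G G' → Split G G1 G2 → ThinSplit G' G1 G2
  | _, _, _, _, .nil, .nil => ⟨[], [], .nil, .nil, .nil⟩
  | _, _, _, _, .keep t, .skip s =>
      let r := s.thin t; ⟨_, _, .skip r.split, .keep r.t1, .keep r.t2⟩
  | _, _, _, _, .keep t, .left s =>
      let r := s.thin t; ⟨_, _, .left r.split, .keep r.t1, .keep r.t2⟩
  | _, _, _, _, .keep t, .right s =>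
      let r := s.thin t; ⟨_, _, .right r.split, .keep r.t1, .keep r.t2⟩
  | _, _, _, _, @Thin.drop (some _) _ _ t, s =>
      let r := s.thin t; ⟨_, _, .left r.split, .drop r.t1, .drop r.t2⟩
  | _, _, _, _, @Thin.drop none _ _ t, s =>
      let r := s.thin t; ⟨_, _, .skip r.split, .drop r.t1, .drop r.t2⟩

theorem Split.thin_sub1 : {G G' G1 G2 : Ctx} → (t : Thin G G') → (s : Split G G1 G2) →
    (η : CtxSem G') → (s.thin t).t1.sem ((s.thin t).split.sub1 η) = s.sub1 (t.sem η)
  | _, _, _, _, .nil, .nil, _ => rfl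
  | _, _, _, _, .keep t, .skip s, η => Split.thin_sub1 t s η
  | _, _, _, _, .keep t, .left s, η => by
      simp only [Split.thin, Thin.sem, Split.sub1]
      exact congrArg _ (Split.thin_sub1 t s η.2)
  | _, _, _, _, .keep t, .right s, η => Split.thin_sub1 t s η.2
  | _, _, _, _, @Thin.drop (some _) _ _ t, s, η => Split.thin_sub1 t s η.2
  | _, _, _, _, @Thin.drop none _ _ t, s, η => Split.thin_sub1 t s η

theorem Split.thin_sub2 : {G G' G1 G2 : Ctx} → (t : Thin G G') → (s : Split G G1 G2) →
    (η : CtxSem G') → (s.thin t).t2.sem ((s.thin t).split.sub2 η) = s.sub2 (t.sem η)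
  | _, _, _, _, .nil, .nil, _ => rfl
  | _, _, _, _, .keep t, .skip s, η => Split.thin_sub2 t s η
  | _, _, _, _, .keep t, .right s, η => by
      simp only [Split.thin, Thin.sem, Split.sub2]
      exact congrArg _ (Split.thin_sub2 t s η.2)
  | _, _, _, _, .keep t, .left s, η => Split.thin_sub2 t s η.2
  | _, _, _, _, @Thin.drop (some _) _ _ t, s, η => Split.thin_sub2 t s η.2
  | _, _, _, _, @Thin.drop none _ _ t, s, η => Split.thin_sub2 t s η

def Term.thin : {G G' : Ctx} → {A : Tp} → Thin G G' → Term G A → Term G' A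
  | _, _, _, t, .var l => .var (l.thin t)
  | _, _, _, _, .null => .null
  | _, _, _, t, .inj1 M => .inj1 (M.thin t)
  | _, _, _, t, .inj2 M => .inj2 (M.thin t)
  | _, _, _, t, .scase s M N1 N2 =>
      let r := s.thin t
      .scase r.split (M.thin r.t1) (N1.thin r.t2.keep) (N2.thin r.t2.keep)
  | _, _, _, t, .pair s M1 M2 =>
      let r := s.thin t
      .pair r.split (M1.thin r.t1) (M2.thin r.t2)
  | _, _, _, t, .letp s M N =>
      let r := s.thin t
      .letp r.split (M.thin r.t1) (N.thin r.t2.keep.keep)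
  | _, _, _, t, .lam M => .lam (M.thin t.keep)
  | _, _, _, t, .app s M N =>
      let r := s.thin t
      .app r.split (M.thin r.t1) (N.thin r.t2)
  | _, _, _, _, .nil => .nil
  | _, _, _, t, .cons s1 s2 Md Mh Mt =>
      let r1 := s1.thin t
      let r2 := s2.thin r1.t2
      .cons r1.split r2.split (Md.thin r1.t1) (Mh.thin r2.t1) (Mt.thin r2.t2)
  | _, _, _, t, .lrec s M N1 N2 =>
      let r := s.thin t
      .lrec r.split (M.thin r.t1) (N1.thin r.t2) N2

theorem Term.thin_sem : {G G' : Ctx} → {A : Tp} → (t : Thin G G') → (M : Term G A) →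
    (η : CtxSem G') → (M.thin t).sem η = M.sem (t.sem η)
  | _, _, _, t, .var l, η => Lk.thin_sem t l η
  | _, _, _, _, .null, _ => rfl
  | _, _, _, t, .inj1 M, η => congrArg Sum.inl (Term.thin_sem t M η)
  | _, _, _, t, .inj2 M, η => congrArg Sum.inr (Term.thin_sem t M η)
  | _, _, _, t, .scase s M N1 N2, η => by
      simp only [Term.thin, Term.sem]
      rw [Term.thin_sem (s.thin t).t1 M, Split.thin_sub1]
      cases M.sem (s.sub1 (t.sem η)) with
      | inl a =>
          dsimp only
          refine (Term.thin_sem (s.thin t).t2.keep N1 _).trans ?_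
          simp only [Thin.sem]
          rw [Split.thin_sub2]
      | inr b =>
          dsimp only
          refine (Term.thin_sem (s.thin t).t2.keep N2 _).trans ?_
          simp only [Thin.sem]
          rw [Split.thin_sub2]
  | _, _, _, t, .pair s M1 M2, η => by
      simp only [Term.thin, Term.sem]
      rw [Term.thin_sem (s.thin t).t1 M1, Term.thin_sem (s.thin t).t2 M2,
        Split.thin_sub1, Split.thin_sub2]
  | _, _, _, t, .letp s M N, η => by
      simp only [Term.thin, Term.sem]
      refine (Term.thin_sem (s.thin t).t2.keep.keep N _).trans ?_
      rw [Term.thin_sem (s.thin t).t1 M, Split.thin_sub1]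
      simp only [Thin.sem]
      rw [Split.thin_sub2]
  | _, _, _, t, .lam M, η => by
      funext a
      simpa only [Term.thin, Term.sem, Thin.sem] using Term.thin_sem t.keep M (a, η)
  | _, _, _, t, .app s M N, η => by
      simp only [Term.thin, Term.sem]
      rw [Term.thin_sem (s.thin t).t1 M, Term.thin_sem (s.thin t).t2 N,
        Split.thin_sub1, Split.thin_sub2]
  | _, _, _, _, .nil, _ => rfl
  | _, _, _, t, .cons s1 s2 Md Mh Mt, η => by
      simp only [Term.thin, Term.sem]
      rw [Term.thin_sem _ Mh, Term.thin_sem _ Mt, Split.thin_sub1, Split.thin_sub2,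
        Split.thin_sub2, Split.thin_sub2]
  | _, _, _, t, .lrec s M N1 N2, η => by
      simp only [Term.thin, Term.sem]
      rw [Term.thin_sem _ M, Term.thin_sem _ N1, Split.thin_sub1, Split.thin_sub2]

/-- Thinning from the empty context to an arbitrary context. -/
def Thin.ofNil : (G : Ctx) → Thin [] G
  | [] => .nil
  | _ :: G => .drop (Thin.ofNil G)

/-- Weakening of a closed term to an arbitrary context. -/
def Term.wk {A : Tp} (G : Ctx) (M : Term [] A) : Term G A := M.thin (Thin.ofNil G)

theorem Term.wk_sem {A : Tp} (G : Ctx) (M : Term [] A) (η : CtxSem G) :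
    (M.wk G).sem η = M.sem PUnit.unit := by
  rw [Term.wk, Term.thin_sem]
  rfl

/-! ## The constant stack: underlying type, terms -/

/-- Underlying stack type: `(1 + A)^c`. -/
def St (A : Tp) (c : ℕ) : Tp := tpow (.sum .unit A) c

/-- Empty stack term: all slots free. -/
def emptyT (A : Tp) : (c : ℕ) → Term [] (St A c)
  | 0 => .null
  | c + 1 => .pair .nil (.inj1 .null) (emptyT A c)

/-- Core push operation on `(1+A)^c`: fills the first free slot. -/
def pushT (A : Tp) : (c : ℕ) →
    Term [] (.arr (.tens A (St A c)) (.tens (St A c) (.sum A .unit)))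
  | 0 =>
      .lam (.letp (.left .nil) (.var .here)
        (.pair (.left (.right (.skip .nil))) (.var .here) (.inj1 (.var (.there .here)))))
  | c + 1 =>
      .lam (.letp (.left .nil) (.var .here)
        (.letp (.left (.right (.skip .nil))) (.var .here)
          (.scase (.right (.left (.skip (.right (.skip .nil))))) (.var (.there .here))
            -- free slot: fill it with x
            (.pair (.right (.left (.skip (.skip (.left (.skip .nil))))))
              (.pair (.skip (.right (.skip (.skip (.left (.skip .nil))))))
                (.inj2 (.var (.there (.there (.there (.there .here))))))
                (.var (.there .here)))
              (.inj2 .null))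
            -- occupied slot: push into the tail
            (.letp (.right (.left (.skip (.skip (.left (.skip .nil))))))
              (.app (.skip (.right (.skip (.skip (.right (.skip .nil))))))
                (Term.wk _ (pushT A c))
                (.pair (.skip (.right (.skip (.skip (.left (.skip .nil))))))
                  (.var (.there (.there (.there (.there .here)))))
                  (.var (.there .here))))
              (.pair (.right (.left (.left (.skip (.skip (.skip (.skip (.skip .nil))))))))
                (.pair (.skip (.right (.left (.skip (.skip (.skip (.skip (.skip .nil))))))))
                  (.inj2 (.var (.there (.there .here))))
                  (.var (.there .here)))
                (.var .here))))))

/-- Core pop operation on `(1+A)^c`: empties the deepest occupied slot. -/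
def popT (A : Tp) : (c : ℕ) →
    Term [] (.arr (St A c) (.tens (St A c) (.sum .unit A)))
  | 0 => .lam (.pair (.left .nil) (.var .here) (.inj1 .null))
  | c + 1 =>
      .lam (.letp (.left .nil) (.var .here)
        (.scase (.right (.left (.skip .nil))) (.var (.there .here))
          -- first slot free: stack empty, fail
          (.pair (.right (.left (.skip (.skip .nil))))
            (.pair (.skip (.right (.skip (.skip .nil))))
              (.inj1 .null) (.var (.there .here)))
            (.inj1 .null))
          -- first slot occupied by y: pop the tail
          (.letp (.right (.left (.skip (.skip .nil))))
            (.app (.skip (.right (.skip (.skip .nil))))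
              (Term.wk _ (popT A c))
              (.var (.there .here)))
            (.scase (.left (.right (.right (.skip (.skip (.skip .nil)))))) (.var .here)
              -- tail empty: return y, free first slot
              (.pair (.right (.skip (.left (.right (.skip (.skip (.skip .nil)))))))
                (.pair (.skip (.skip (.right (.skip (.skip (.skip (.skip .nil)))))))
                  (.inj1 .null)
                  (.var (.there (.there .here))))
                (.inj2 (.var (.there (.there (.there .here))))))
              -- tail returned x: keep y, use popped tail
              (.pair (.right (.skip (.left (.left (.skip (.skip (.skip .nil)))))))
                (.pair (.skip (.skip (.right (.left (.skip (.skip (.skip .nil)))))))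
                  (.inj2 (.var (.there (.there (.there .here)))))
                  (.var (.there (.there .here))))
                (.inj2 (.var .here)))))))

/-! ## Semantic model of the constant stack -/

def pushF (A : Tp) : (c : ℕ) → A.sem × (St A c).sem → (St A c).sem × (A.sem ⊕ Unit)
  | 0, p => (p.2, .inl p.1)
  | c + 1, (x, (h, t)) =>
      match h with
      | .inl _ => ((.inr x, t), .inr ())
      | .inr y => ((.inr y, (pushF A c (x, t)).1), (pushF A c (x, t)).2)

def popF (A : Tp) : (c : ℕ) → (St A c).sem → (St A c).sem × (Unit ⊕ A.sem)
  | 0, s => (s, .inl ())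
  | c + 1, (h, t) =>
      match h with
      | .inl _ => ((.inl (), t), .inl ())
      | .inr y =>
          match popF A c t with
          | (t', .inl _) => ((.inl (), t'), .inr y)
          | (t', .inr x) => ((.inr y, t'), .inr x)

def itemsF (A : Tp) : (c : ℕ) → (St A c).sem → List A.sem
  | 0, _ => []
  | c + 1, (h, t) =>
      match h with
      | .inl _ => []
      | .inr y => itemsF A c t ++ [y]

def validF (A : Tp) : (c : ℕ) → (St A c).sem → Prop
  | 0, _ => True
  | c + 1, (h, t) =>
      match h with
      | .inl _ => itemsF A c t = [] ∧ validF A c t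
      | .inr _ => validF A c t

theorem pushT_sem (A : Tp) : ∀ (c : ℕ) (p : A.sem × (St A c).sem),
    (pushT A c).sem PUnit.unit p = pushF A c p
  | 0, p => rfl
  | c + 1, (x, (h, t)) => by
      cases h with
      | inl u =>
          rfl
      | inr y =>
          show ((Sum.inr y, ((Term.wk [none, none, none, none, none, none] (pushT A c)).sem PUnit.unit (x, t)).1), ((Term.wk [none, none, none, none, none, none] (pushT A c)).sem PUnit.unit (x, t)).2) = _
          have h := (congrFun (Term.wk_sem [none, none, none, none, none, none] (pushT A c)
            PUnit.unit) (x, t)).trans (pushT_sem A c (x, t))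
          rw [h]
          rfl

theorem popT_sem (A : Tp) : ∀ (c : ℕ) (s : (St A c).sem),
    (popT A c).sem PUnit.unit s = popF A c s
  | 0, s => rfl
  | c + 1, (h, t) => by
      cases h with
      | inl u => rfl
      | inr y =>
          simp only [popT, Term.sem, Lk.sem, Split.sub1, Split.sub2, popF]
          have h := (congrFun (Term.wk_sem [none, none, none, none] (popT A c)
            PUnit.unit) t).trans (popT_sem A c t)
          erw [h]
          rcases hr : popF A c t with ⟨t', r⟩
          cases r <;> rfl

/-! ## Correctness lemmas for the model -/

theorem emptyT_ok (A : Tp) (c : ℕ) :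
    validF A c ((emptyT A c).sem PUnit.unit) ∧
      itemsF A c ((emptyT A c).sem PUnit.unit) = [] := by
  induction c with
  | zero => exact ⟨trivial, rfl⟩
  | succ c ih => exact ⟨⟨ih.2, ih.1⟩, rfl⟩

theorem pushF_full (A : Tp) : ∀ (c : ℕ) (x : A.sem) (s : (St A c).sem),
    validF A c s → (itemsF A c s).length = c → pushF A c (x, s) = (s, .inl x)
  | 0, x, s, _, _ => rfl
  | c + 1, x, (h, t), hv, hl => by
    cases h with
    | inl u => simp [itemsF] at hl
    | inr y =>
      have hl' : (itemsF A c t).length = c := by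
        simpa [itemsF] using hl
      simp [pushF, pushF_full A c x t hv hl']

theorem pushF_succ (A : Tp) : ∀ (c : ℕ) (x : A.sem) (s : (St A c).sem),
    validF A c s → (itemsF A c s).length < c →
    ∃ s', pushF A c (x, s) = (s', .inr ()) ∧ validF A c s' ∧
      itemsF A c s' = x :: itemsF A c s
  | 0, x, s, _, hl => absurd hl (by simp [itemsF])
  | c + 1, x, (h, t), hv, hl => by
    cases h with
    | inl u =>
      refine ⟨(Sum.inr x, t), rfl, hv.2, ?_⟩
      show itemsF A c t ++ [x] = x :: itemsF A (c + 1) (Sum.inl u, t)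
      simp [itemsF, hv.1]
    | inr y =>
      have hl' : (itemsF A c t).length < c := by
        have : (itemsF A c t).length + 1 < c + 1 := by simpa [itemsF] using hl
        omega
      obtain ⟨t', he, hv', hi⟩ := pushF_succ A c x t hv hl'
      refine ⟨(Sum.inr y, t'), by simp [pushF, he], hv', ?_⟩
      show itemsF A c t' ++ [y] = x :: itemsF A (c + 1) (Sum.inr y, t)
      simp [itemsF, hi]

theorem popF_empty (A : Tp) : ∀ (c : ℕ) (s : (St A c).sem),
    validF A c s → itemsF A c s = [] → popF A c s = (s, .inl ())
  | 0, s, _, _ => rfl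
  | c + 1, (h, t), hv, hi => by
    cases h with
    | inl u => rfl
    | inr y => simp [itemsF] at hi

theorem popF_succ (A : Tp) : ∀ (c : ℕ) (s : (St A c).sem) (x : A.sem) (l : List A.sem),
    validF A c s → itemsF A c s = x :: l →
    ∃ s', popF A c s = (s', .inr x) ∧ validF A c s' ∧ itemsF A c s' = l
  | 0, s, x, l, _, hi => by simp [itemsF] at hi
  | c + 1, (h, t), x, l, hv, hi => by
    cases h with
    | inl u => simp [itemsF] at hi
    | inr y =>
      have hi' : itemsF A c t ++ [y] = x :: l := hi
      rcases hit : itemsF A c t with _ | ⟨x', l'⟩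
      · rw [hit] at hi'
        simp only [List.nil_append, List.cons.injEq] at hi'
        obtain ⟨rfl, rfl⟩ := hi'
        refine ⟨(Sum.inl (), t), ?_, ⟨hit, hv⟩, rfl⟩
        simp [popF, popF_empty A c t hv hit]
      · rw [hit] at hi'
        simp only [List.cons_append, List.cons.injEq] at hi'
        obtain ⟨rfl, rfl⟩ := hi'
        obtain ⟨t', he, hv', hit'⟩ := popF_succ A c t x' l' hv hit
        refine ⟨(Sum.inr y, t'), by simp [popF, he], hv', ?_⟩
        show itemsF A c t' ++ [y] = l' ++ [y]
        rw [hit']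

/-! ## Top-level push and pop terms -/

def pushTop (A : Tp) (c : ℕ) :
    Term [] (.arr (dpow 0) (.arr (.tens A (St A c))
      (.tens (dpow 0) (.tens (St A c) (.sum A .unit))))) :=
  .lam (.lam (.pair (.right (.right .nil)) .null
    (.app (.right (.right .nil)) (Term.wk _ (pushT A c)) (.var .here))))

def popTop (A : Tp) (c : ℕ) :
    Term [] (.arr (dpow 0) (.arr (St A c)
      (.tens (dpow 0) (.tens (St A c) (.sum .unit A))))) :=
  .lam (.lam (.pair (.right (.right .nil)) .null
    (.app (.right (.right .nil)) (Term.wk _ (popT A c)) (.var .here))))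

theorem pushTop_sem (A : Tp) (c : ℕ) (u : (dpow 0).sem) (p : A.sem × (St A c).sem) :
    (pushTop A c).sem PUnit.unit u p = ((), pushF A c p) := by
  show ((), (Term.wk [none, none] (pushT A c)).sem PUnit.unit p) = _
  exact congrArg (Prod.mk ()) ((congrFun (Term.wk_sem [none, none] (pushT A c) PUnit.unit) p).trans
    (pushT_sem A c p))

theorem popTop_sem (A : Tp) (c : ℕ) (u : (dpow 0).sem) (s : (St A c).sem) :
    (popTop A c).sem PUnit.unit u s = ((), popF A c s) := by
  show ((), (Term.wk [none, none] (popT A c)).sem PUnit.unit s) = _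
  exact congrArg (Prod.mk ()) ((congrFun (Term.wk_sem [none, none] (popT A c) PUnit.unit) s).trans
    (popT_sem A c s))
/-- **Constant stack construction**: for any element type `A` and `c ∈ ℕ`,
there is a `0`-stack implementation with element type `A`, whose underlying
type is the `c`-fold tensor `(1 + A)^c`, that is correct and bounded by the
constant function `B(n) = c`. -/
theorem constant_stack_construction (A : Tp) (c : ℕ) :
    ∃ imp : StackImpl A 0,
      imp.S = tpow (.sum .unit A) c ∧
      Nonempty (StackCorrect imp fun _ => c) := by
  refine ⟨⟨St A c, emptyT A c, pushTop A c, popTop A c⟩, rfl, ⟨?_⟩⟩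
  refine ⟨fun _ s => validF A c s, fun _ s => itemsF A c s, ?_, ?_, ?_, ?_, ?_, ?_⟩
  · intro n; exact (emptyT_ok A c).1
  · intro n; exact (emptyT_ok A c).2
  · intro n x s hv hl
    show (pushTop A c).sem PUnit.unit (mnk n 0) (x, s) = (mnk n 0, (s, Sum.inl x))
    rw [pushTop_sem, pushF_full A c x s hv hl]; rfl
  · intro n x s hv hl
    obtain ⟨s', he, hv', hi⟩ := pushF_succ A c x s hv hl
    refine ⟨s', ?_, hv', hi⟩
    show (pushTop A c).sem PUnit.unit (mnk n 0) (x, s) = (mnk n 0, (s', Sum.inr ()))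
    rw [pushTop_sem, he]; rfl
  · intro n s hv hi
    show (popTop A c).sem PUnit.unit (mnk n 0) s = (mnk n 0, (s, Sum.inl ()))
    rw [popTop_sem, popF_empty A c s hv hi]; rfl
  · intro n s x l hv hi
    obtain ⟨s', he, hv', hi'⟩ := popF_succ A c s x l hv hi
    refine ⟨s', ?_, hv', hi'⟩
    show (popTop A c).sem PUnit.unit (mnk n 0) s = (mnk n 0, (s', Sum.inr x))
    rw [popTop_sem, he]; rfl
end

section
/- Additive stack construction: fix an LFPL element type A and k ∈ ℕ. If for i ∈ {1,2} there is a k-stack implementation with element type A, underlying type S_i, that is correct and bounded by B_i : ℕ → ℕ, then there is a k-stack implementation with element type A and underlying type S₁ ⊗ S₂ that is correct and bounded by B(n) = B₁(n) + B₂(n). -/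
namespace AddStack

variable (A : Tp) (k : ℕ) (S1 S2 : Tp)

/-- The type of the `push` operation. -/
abbrev PushTy (S : Tp) : Tp :=
  .arr (dpow k) (.arr (.tens A S) (.tens (dpow k) (.tens S (.sum A .unit))))

/-- The type of the `pop` operation. -/
abbrev PopTy (S : Tp) : Tp :=
  .arr (dpow k) (.arr S (.tens (dpow k) (.tens S (.sum .unit A))))

/-- Combined push code, in a context with variables for the two push operations. -/
def pushCode : Term [some (PushTy A k S2), some (PushTy A k S1)]
    (PushTy A k (.tens S1 S2)) :=
  .lam (.lam <| -- ctx: [some (.tens A (.tens S1 S2)), some D, some T2, some T1]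
    .letp (.left (.right (.right (.right .nil)))) (.var .here) <|
    -- ctx: [some (.tens S1 S2), some A, none, some D, some T2, some T1]
    .letp (.left (.right (.skip (.right (.right (.right .nil)))))) (.var .here) <|
    -- ctx: [some S2, some S1, none, some A, none, some D, some T2, some T1]
    .letp (.left (.right (.skip (.left (.skip (.left (.left (.right .nil))))))))
      -- scrutinee ctx: [some S2, none, none, some A, none, some D, some T2, none]
      (.app (.right (.skip (.skip (.right (.skip (.left (.left (.skip .nil))))))))
        (.app (.skip (.skip (.skip (.skip (.skip (.right (.left (.skip .nil))))))))
          (.var (.there (.there (.there (.there (.there (.there .here)))))))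
          (.var (.there (.there (.there (.there (.there .here)))))))
        (.pair (.right (.skip (.skip (.left (.skip (.skip (.skip (.skip .nil))))))))
          (.var (.there (.there (.there .here))))
          (.var .here))) <|
    -- ctx: [some (.tens S2 (.sum A .unit)), some D, none, some S1, n,n,n,n,n, some T1]
    .letp (.left (.right (.skip (.right (.skip (.skip (.skip (.skip (.skip (.right .nil))))))))))
      (.var .here) <|
    -- ctx: [some (.sum A .unit), some S2, none, some D, none, some S1, n,n,n,n,n, some T1]
    .scase (.left (.right (.skip (.right (.skip (.right (.skip (.skip (.skip (.skip (.skip (.right .nil))))))))))))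
      (.var .here)
      -- inl branch: ctx [some A, none, some S2, none, some D, none, some S1, n×5, some T1]
      (.letp (.left (.skip (.right (.skip (.left (.skip (.left (.skip (.skip (.skip (.skip (.skip (.left .nil)))))))))))))
        -- scrutinee ctx: [some A, n,n,n, some D, none, some S1, n×5, some T1]
        (.app (.right (.skip (.skip (.skip (.left (.skip (.right (.skip (.skip (.skip (.skip (.skip (.left .nil)))))))))))))
          (.app (.skip (.skip (.skip (.skip (.right (.skip (.skip (.skip (.skip (.skip (.skip (.skip (.left .nil)))))))))))))
            (.var (.there (.there (.there (.there (.there (.there (.there (.there (.there (.there (.there (.there .here)))))))))))))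
            (.var (.there (.there (.there (.there .here))))))
          (.pair (.left (.skip (.skip (.skip (.skip (.skip (.right (.skip (.skip (.skip (.skip (.skip (.skip .nil)))))))))))))
            (.var .here)
            (.var (.there (.there (.there (.there (.there (.there .here)))))))))
        -- ctx: [some (.tens S1 (.sum A .unit)), some D, none, none, some S2, n×10]
        (.letp (.left (.right (.skip (.skip (.right (.skip (.skip (.skip (.skip (.skip (.skip (.skip (.skip (.skip (.skip .nil)))))))))))))))
          (.var .here) <|
          -- ctx: [some (.sum A .unit), some S1, none, some D, none, none, some S2, n×10]
          .pair (.right (.right (.skip (.left (.skip (.skip (.right (.skip (.skip (.skip (.skip (.skip (.skip (.skip (.skip (.skip (.skip .nil)))))))))))))))))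
            (.var (.there (.there (.there .here))))
            (.pair (.right (.left (.skip (.skip (.skip (.skip (.left (.skip (.skip (.skip (.skip (.skip (.skip (.skip (.skip (.skip (.skip .nil)))))))))))))))))
              (.pair (.skip (.left (.skip (.skip (.skip (.skip (.right (.skip (.skip (.skip (.skip (.skip (.skip (.skip (.skip (.skip (.skip .nil)))))))))))))))))
                (.var (.there .here))
                (.var (.there (.there (.there (.there (.there (.there .here))))))))
              (.var .here))))
      -- inr branch: ctx [some .unit, none, some S2, none, some D, none, some S1, n×5, some T1]
      (.pair (.right (.skip (.right (.skip (.left (.skip (.right (.skip (.skip (.skip (.skip (.skip (.right .nil)))))))))))))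
        (.var (.there (.there (.there (.there .here)))))
        (.pair (.left (.skip (.left (.skip (.skip (.skip (.left (.skip (.skip (.skip (.skip (.skip (.left .nil)))))))))))))
          (.pair (.right (.skip (.right (.skip (.skip (.skip (.left (.skip (.skip (.skip (.skip (.skip (.right .nil)))))))))))))
            (.var (.there (.there (.there (.there (.there (.there .here)))))))
            (.var (.there (.there .here))))
          (.inj2 .null))))

end AddStack
namespace AddStack

variable (A : Tp) (k : ℕ) (S1 S2 : Tp)

/-- Combined pop code, in a context with variables for the two pop operations. -/
def popCode : Term [some (PopTy A k S2), some (PopTy A k S1)]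
    (PopTy A k (.tens S1 S2)) :=
  .lam (.lam <| -- ctx: [some (.tens S1 S2), some D, some P2, some P1]
    .letp (.left (.right (.right (.right .nil)))) (.var .here) <|
    -- ctx: [some S2, some S1, none, some D, some P2, some P1]
    .letp (.right (.left (.skip (.left (.right (.left .nil))))))
      -- scrutinee ctx: [none, some S1, none, some D, none, some P1]
      (.app (.skip (.right (.skip (.left (.skip (.left .nil))))))
        (.app (.skip (.skip (.skip (.right (.skip (.left .nil))))))
          (.var (.there (.there (.there (.there (.there .here))))))
          (.var (.there (.there (.there .here)))))
        (.var (.there .here))) <|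
    -- ctx: [some (.tens S1 (.sum .unit A)), some D, some S2, n, n, n, some P2, none]
    .letp (.left (.right (.right (.skip (.skip (.skip (.right (.skip .nil))))))))
      (.var .here) <|
    -- ctx: [some (.sum .unit A), some S1, none, some D, some S2, n,n,n, some P2, none]
    .scase (.left (.right (.skip (.right (.right (.skip (.skip (.skip (.right (.skip .nil))))))))))
      (.var .here)
      -- inl branch (pop1 empty): ctx [some .unit, none, some S1, none, some D, some S2, n,n,n, some P2, none]
      (.letp (.right (.skip (.right (.skip (.left (.left (.skip (.skip (.skip (.left (.skip .nil)))))))))))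
        -- scrutinee ctx: [n,n,n,n, some D, some S2, n,n,n, some P2, none]
        (.app (.skip (.skip (.skip (.skip (.left (.right (.skip (.skip (.skip (.left (.skip .nil)))))))))))
          (.app (.skip (.skip (.skip (.skip (.right (.skip (.skip (.skip (.skip (.left (.skip .nil)))))))))))
            (.var (.there (.there (.there (.there (.there (.there (.there (.there (.there .here))))))))))
            (.var (.there (.there (.there (.there .here))))))
          (.var (.there (.there (.there (.there (.there .here)))))))
        -- ctx: [some (.tens S2 (.sum .unit A)), some D, some .unit, none, some S1, n×8]
        (.letp (.left (.right (.right (.skip (.right (.skip (.skip (.skip (.skip (.skip (.skip (.skip (.skip .nil)))))))))))))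
          (.var .here) <|
          -- ctx: [some (.sum .unit A), some S2, none, some D, some .unit, none, some S1, n×8]
          .pair (.right (.right (.skip (.left (.right (.skip (.right (.skip (.skip (.skip (.skip (.skip (.skip (.skip (.skip .nil)))))))))))))))
            (.var (.there (.there (.there .here))))
            (.pair (.right (.left (.skip (.skip (.left (.skip (.left (.skip (.skip (.skip (.skip (.skip (.skip (.skip (.skip .nil)))))))))))))))
              (.pair (.skip (.right (.skip (.skip (.right (.skip (.left (.skip (.skip (.skip (.skip (.skip (.skip (.skip (.skip .nil)))))))))))))))
                (.var (.there (.there (.there (.there (.there (.there .here)))))))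
                (.var (.there .here)))
              (.var .here))))
      -- inr branch (pop1 got x): ctx [some A, none, some S1, none, some D, some S2, n,n,n, some P2, none]
      (.pair (.right (.skip (.right (.skip (.left (.right (.skip (.skip (.skip (.right (.skip .nil)))))))))))
        (.var (.there (.there (.there (.there .here)))))
        (.pair (.right (.skip (.left (.skip (.skip (.left (.skip (.skip (.skip (.left (.skip .nil)))))))))))
          (.pair (.skip (.skip (.left (.skip (.skip (.right (.skip (.skip (.skip (.right (.skip .nil)))))))))))
            (.var (.there (.there .here)))
            (.var (.there (.there (.there (.there (.there .here)))))))
          (.inj2 (.var .here)))))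

end AddStack
namespace AddStack

/-- The combined stack implementation. -/
def combImpl {A : Tp} {k : ℕ} (imp1 imp2 : StackImpl A k) : StackImpl A k where
  S := .tens imp1.S imp2.S
  empty := .pair .nil imp1.empty imp2.empty
  push := .app .nil (.app .nil (.lam (.lam (pushCode A k imp1.S imp2.S))) imp1.push) imp2.push
  pop := .app .nil (.app .nil (.lam (.lam (popCode A k imp1.S imp2.S))) imp1.pop) imp2.pop

variable {A : Tp} {k : ℕ} (imp1 imp2 : StackImpl A k)

lemma combImpl_empty_sem :
    (combImpl imp1 imp2).empty.sem PUnit.unit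
      = (imp1.empty.sem PUnit.unit, imp2.empty.sem PUnit.unit) := rfl

lemma combImpl_push_sem (d : (dpow k).sem) (x : A.sem) (s1 : imp1.S.sem) (s2 : imp2.S.sem) :
    (combImpl imp1 imp2).push.sem PUnit.unit d (x, (s1, s2)) =
      (match (imp2.push.sem PUnit.unit d (x, s2)).2.2 with
        | Sum.inl x' =>
          ((imp1.push.sem PUnit.unit (imp2.push.sem PUnit.unit d (x, s2)).1 (x', s1)).1,
            (((imp1.push.sem PUnit.unit (imp2.push.sem PUnit.unit d (x, s2)).1 (x', s1)).2.1,
              (imp2.push.sem PUnit.unit d (x, s2)).2.1),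
             (imp1.push.sem PUnit.unit (imp2.push.sem PUnit.unit d (x, s2)).1 (x', s1)).2.2))
        | Sum.inr _ =>
          ((imp2.push.sem PUnit.unit d (x, s2)).1,
            ((s1, (imp2.push.sem PUnit.unit d (x, s2)).2.1), Sum.inr ()))) := by
  rcases hx : (imp2.push.sem PUnit.unit d (x, s2)).2.2 with x' | u <;>
    simp only [combImpl, pushCode, Term.sem, Split.sub1, Split.sub2] <;> split <;> rename_i heq <;>
    (have h2 := heq.symm.trans hx) <;> cases h2 <;> rfl

lemma combImpl_pop_sem (d : (dpow k).sem) (s1 : imp1.S.sem) (s2 : imp2.S.sem) :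
    (combImpl imp1 imp2).pop.sem PUnit.unit d (s1, s2) =
      (match (imp1.pop.sem PUnit.unit d s1).2.2 with
        | Sum.inl _ =>
          ((imp2.pop.sem PUnit.unit (imp1.pop.sem PUnit.unit d s1).1 s2).1,
            (((imp1.pop.sem PUnit.unit d s1).2.1,
              (imp2.pop.sem PUnit.unit (imp1.pop.sem PUnit.unit d s1).1 s2).2.1),
             (imp2.pop.sem PUnit.unit (imp1.pop.sem PUnit.unit d s1).1 s2).2.2))
        | Sum.inr x =>
          ((imp1.pop.sem PUnit.unit d s1).1,
            (((imp1.pop.sem PUnit.unit d s1).2.1, s2), Sum.inr x))) := by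
  rcases hx : (imp1.pop.sem PUnit.unit d s1).2.2 with u | x <;>
    simp only [combImpl, popCode, Term.sem, Split.sub1, Split.sub2] <;> split <;> rename_i heq <;>
    (have h2 := heq.symm.trans hx) <;> cases h2 <;> rfl

end AddStack
namespace AddStack

variable {A : Tp} {k : ℕ} {imp1 imp2 : StackImpl A k} {B1 B2 : ℕ → ℕ}

/-- Correctness of the combined implementation. -/
def combCorrect (hC1 : StackCorrect imp1 B1) (hC2 : StackCorrect imp2 B2) :
    StackCorrect (combImpl imp1 imp2) (fun n => B1 n + B2 n) where
  valid n s := hC1.valid n s.1 ∧ hC2.valid n s.2 ∧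
    (hC1.items n s.1 ≠ [] → (hC2.items n s.2).length = B2 n) ∧
    (hC1.items n s.1).length ≤ B1 n ∧ (hC2.items n s.2).length ≤ B2 n
  items n s := hC1.items n s.1 ++ hC2.items n s.2
  empty_valid n := by
    rw [combImpl_empty_sem]
    exact ⟨hC1.empty_valid n, hC2.empty_valid n,
      fun h => absurd (hC1.empty_items n) h,
      by simp [hC1.empty_items n], by simp [hC2.empty_items n]⟩
  empty_items n := by
    rw [combImpl_empty_sem]
    simp [hC1.empty_items n, hC2.empty_items n]
  push_full n x s hv hlen := by
    obtain ⟨s1, s2⟩ := s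
    dsimp only at *
    obtain ⟨h1v, h2v, hinv, hl1, hl2⟩ := hv
    simp only [List.length_append] at hlen
    have e1 : (hC1.items n s1).length = B1 n := by omega
    have e2 : (hC2.items n s2).length = B2 n := by omega
    have H2 := hC2.push_full n x s2 h2v e2
    have H1 := hC1.push_full n x s1 h1v e1
    rw [combImpl_push_sem]
    simp [H2, H1]; rfl
  push_succ n x s hv hlen := by
    obtain ⟨s1, s2⟩ := s
    dsimp only at *
    obtain ⟨h1v, h2v, hinv, hl1, hl2⟩ := hv
    simp only [List.length_append] at hlen
    by_cases hfull : (hC2.items n s2).length = B2 n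
    · have hi1 : (hC1.items n s1).length < B1 n := by omega
      obtain ⟨s1', H1, h1v', h1i⟩ := hC1.push_succ n x s1 h1v hi1
      have H2 := hC2.push_full n x s2 h2v hfull
      refine ⟨(s1', s2), ?_, ⟨h1v', h2v, fun _ => hfull, ?_, hl2⟩, ?_⟩
      · rw [combImpl_push_sem]; simp [H2, H1]; rfl
      · rw [h1i]; simpa using hi1
      · simp [h1i]
    · have hi2 : (hC2.items n s2).length < B2 n := lt_of_le_of_ne hl2 hfull
      have hi1e : hC1.items n s1 = [] := by
        by_contra h; exact hfull (hinv h)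
      obtain ⟨s2', H2, h2v', h2i⟩ := hC2.push_succ n x s2 h2v hi2
      refine ⟨(s1, s2'), ?_, ⟨h1v, h2v', fun h => absurd hi1e h, hl1, ?_⟩, ?_⟩
      · rw [combImpl_push_sem]; simp [H2]; rfl
      · rw [h2i]; simpa using hi2
      · simp [hi1e, h2i]
  pop_empty n s hv hie := by
    obtain ⟨s1, s2⟩ := s
    dsimp only at *
    obtain ⟨h1v, h2v, hinv, hl1, hl2⟩ := hv
    rw [List.append_eq_nil_iff] at hie
    have H1 := hC1.pop_empty n s1 h1v hie.1
    have H2 := hC2.pop_empty n s2 h2v hie.2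
    rw [combImpl_pop_sem]
    simp [H1, H2]; rfl
  pop_succ n s x l hv hxl := by
    obtain ⟨s1, s2⟩ := s
    dsimp only at *
    obtain ⟨h1v, h2v, hinv, hl1, hl2⟩ := hv
    rcases hi1 : hC1.items n s1 with _ | ⟨y, t⟩
    · have hi2 : hC2.items n s2 = x :: l := by
        rw [hi1] at hxl; simpa using hxl
      obtain ⟨s2', H2, h2v', h2i⟩ := hC2.pop_succ n s2 x l h2v hi2
      have H1 := hC1.pop_empty n s1 h1v hi1
      refine ⟨(s1, s2'), ?_, ⟨h1v, h2v', fun h => absurd hi1 h, hl1, ?_⟩, ?_⟩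
      · rw [combImpl_pop_sem]; simp [H1, H2]; rfl
      · rw [h2i]; rw [hi2] at hl2; simp at hl2; omega
      · simp [hi1, h2i]
    · rw [hi1, List.cons_append] at hxl
      injection hxl with hy hl'
      subst hy; subst hl'
      obtain ⟨s1', H1, h1v', h1i⟩ := hC1.pop_succ n s1 y t h1v hi1
      refine ⟨(s1', s2), ?_, ⟨h1v', h2v, fun _ => hinv (by rw [hi1]; simp), ?_, hl2⟩, ?_⟩
      · rw [combImpl_pop_sem]; simp [H1]; rfl
      · rw [h1i]; rw [hi1] at hl1; simp at hl1; omega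
      · simp [h1i]

end AddStack

/-- **Additive stack construction**: from correct `k`-stack implementations
with element type `A`, underlying types `S₁`, `S₂`, bounded by `B₁`, `B₂`,
one obtains a correct `k`-stack implementation with element type `A` and
underlying type `S₁ ⊗ S₂` bounded by `B(n) = B₁(n) + B₂(n)`. -/
theorem additive_stack_construction (A : Tp) (k : ℕ)
    (imp1 imp2 : StackImpl A k) (B1 B2 : ℕ → ℕ)
    (hC1 : StackCorrect imp1 B1) (hC2 : StackCorrect imp2 B2) :
    ∃ imp : StackImpl A k,
      imp.S = .tens imp1.S imp2.S ∧
      Nonempty (StackCorrect imp fun n => B1 n + B2 n) := by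
  exact ⟨AddStack.combImpl imp1 imp2, rfl, ⟨AddStack.combCorrect hC1 hC2⟩⟩
end

section
/- Polynomial iteration in LFPL: let f : (A ⊗ L(1)) ⊸ (A ⊗ L(1)) be a closed LFPL term and P : ℕ → ℕ a polynomial with natural-number coefficients. Then there exists a closed term f^{♯P} : (A ⊗ L(1)) ⊸ (A ⊗ L(1)) such that for all x ∈ ⟦A⟧ and n ∈ ⟦L(1)⟧, ⟦f^{♯P}⟧(x, n) = ⟦f⟧^{P(|n|)}(x, n). -/
/-! ## Weakening by one extra slot at the end of the context -/

def Lk.wkO : {G : Ctx} → {A : Tp} → Lk G A → (o : Option Tp) → Lk (G ++ [o]) A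
  | _, _, .here, _ => .here
  | _, _, .there l, o => .there (l.wkO o)

def Split.wkL : {G G1 G2 : Ctx} → Split G G1 G2 → (o : Option Tp) →
    Split (G ++ [o]) (G1 ++ [o]) (G2 ++ [none])
  | _, _, _, .nil, some _ => .left .nil
  | _, _, _, .nil, none => .skip .nil
  | _, _, _, .skip s, o => .skip (s.wkL o)
  | _, _, _, .left s, o => .left (s.wkL o)
  | _, _, _, .right s, o => .right (s.wkL o)

def Term.wkO : {G : Ctx} → {C : Tp} → Term G C → (o : Option Tp) → Term (G ++ [o]) C
  | _, _, .var l, o => .var (l.wkO o)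
  | _, _, .null, _ => .null
  | _, _, .inj1 M, o => .inj1 (M.wkO o)
  | _, _, .inj2 M, o => .inj2 (M.wkO o)
  | _, _, .scase s M N1 N2, o => .scase (s.wkL o) (M.wkO o) (N1.wkO none) (N2.wkO none)
  | _, _, .pair s M1 M2, o => .pair (s.wkL o) (M1.wkO o) (M2.wkO none)
  | _, _, .letp s M N, o => .letp (s.wkL o) (M.wkO o) (N.wkO none)
  | _, _, .lam M, o => .lam (M.wkO o)
  | _, _, .app s M N, o => .app (s.wkL o) (M.wkO o) (N.wkO none)
  | _, _, .nil, _ => .nil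
  | _, _, .cons s1 s2 Md Mh Mt, o =>
      .cons (s1.wkL o) (s2.wkL none) (Md.wkO o) (Mh.wkO none) (Mt.wkO none)
  | _, _, .lrec s M N1 N2, o => .lrec (s.wkL o) (M.wkO o) (N1.wkO none) N2

def restrictO : (G : Ctx) → (o : Option Tp) → CtxSem (G ++ [o]) → CtxSem G
  | [], _, _ => PUnit.unit
  | some _ :: G, o, η => (η.1, restrictO G o η.2)
  | none :: G, o, η => restrictO G o η

theorem Lk.wkO_sem : {G : Ctx} → {A : Tp} → (l : Lk G A) → (o : Option Tp) →
    (η : CtxSem (G ++ [o])) → (l.wkO o).sem η = l.sem (restrictO G o η)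
  | _, _, .here, _, _ => rfl
  | (some _ :: _), _, .there l, o, η => l.wkO_sem o η.2
  | (none :: _), _, .there l, o, η => l.wkO_sem o η

theorem Split.wkL_sub1 : {G G1 G2 : Ctx} → (s : Split G G1 G2) → (o : Option Tp) →
    (η : CtxSem (G ++ [o])) →
    restrictO G1 o ((s.wkL o).sub1 η) = s.sub1 (restrictO G o η)
  | _, _, _, .nil, some _, _ => rfl
  | _, _, _, .nil, none, _ => rfl
  | (none :: _), _, _, .skip s, o, η => s.wkL_sub1 o η
  | (some _ :: _), _, _, .left s, o, η => by
      simp only [Split.wkL, Split.sub1, restrictO, s.wkL_sub1 o η.2]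
      rfl
  | (some _ :: _), _, _, .right s, o, η => s.wkL_sub1 o η.2

theorem Split.wkL_sub2 : {G G1 G2 : Ctx} → (s : Split G G1 G2) → (o : Option Tp) →
    (η : CtxSem (G ++ [o])) →
    restrictO G2 none ((s.wkL o).sub2 η) = s.sub2 (restrictO G o η)
  | _, _, _, .nil, some _, _ => rfl
  | _, _, _, .nil, none, _ => rfl
  | (none :: _), _, _, .skip s, o, η => s.wkL_sub2 o η
  | (some _ :: _), _, _, .left s, o, η => s.wkL_sub2 o η.2
  | (some _ :: _), _, _, .right s, o, η => by
      simp only [Split.wkL, Split.sub2, restrictO, s.wkL_sub2 o η.2]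
      rfl

theorem Term.wkO_sem : {G : Ctx} → {C : Tp} → (M : Term G C) → (o : Option Tp) →
    (η : CtxSem (G ++ [o])) → (M.wkO o).sem η = M.sem (restrictO G o η)
  | _, _, .var l, o, η => l.wkO_sem o η
  | _, _, .null, _, _ => rfl
  | _, _, .inj1 M, o, η => by simp only [Term.wkO, Term.sem, M.wkO_sem o η]; rfl
  | _, _, .inj2 M, o, η => by simp only [Term.wkO, Term.sem, M.wkO_sem o η]; rfl
  | _, _, .scase s M N1 N2, o, η => by
      simp only [Term.wkO, Term.sem, M.wkO_sem o, s.wkL_sub1 o η, s.wkL_sub2 o η]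
      rw [← s.wkL_sub1 o η]
      cases M.sem (restrictO _ o ((s.wkL o).sub1 η)) with
      | inl a => exact (N1.wkO_sem none _).trans (congrArg (fun e => N1.sem (a, e)) (s.wkL_sub2 o η))
      | inr b => exact (N2.wkO_sem none _).trans (congrArg (fun e => N2.sem (b, e)) (s.wkL_sub2 o η))
  | _, _, .pair s M1 M2, o, η => by
      simp only [Term.wkO, Term.sem, M1.wkO_sem o, M2.wkO_sem none,
        s.wkL_sub1 o η, s.wkL_sub2 o η]
      rfl
  | _, _, .letp s M N, o, η => by
      simp only [Term.wkO, Term.sem, M.wkO_sem o, N.wkO_sem none, restrictO,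
        s.wkL_sub1 o η, s.wkL_sub2 o η]
      exact (N.wkO_sem none _).trans (congrArg (fun e => N.sem (_, _, e)) (s.wkL_sub2 o η))
  | _, _, .lam M, o, η => by
      funext a
      exact M.wkO_sem o (a, η)
  | _, _, .app s M N, o, η => by
      simp only [Term.wkO, Term.sem, M.wkO_sem o, N.wkO_sem none,
        s.wkL_sub1 o η, s.wkL_sub2 o η]
  | _, _, .nil, _, _ => rfl
  | _, _, .cons s1 s2 Md Mh Mt, o, η => by
      simp only [Term.wkO, Term.sem, Mh.wkO_sem none, Mt.wkO_sem none,
        s2.wkL_sub1 none, s2.wkL_sub2 none, s1.wkL_sub2 o η]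
      rfl
  | _, _, .lrec s M N1 N2, o, η => by
      simp only [Term.wkO, Term.sem, M.wkO_sem o, N1.wkO_sem none,
        s.wkL_sub1 o η, s.wkL_sub2 o η]

theorem exists_wk {C : Tp} (M : Term [] C) (G : Ctx) :
    ∃ N : Term G C, ∀ η, N.sem η = M.sem PUnit.unit := by
  induction G using List.reverseRecOn with
  | nil => exact ⟨M, fun η => rfl⟩
  | append_singleton G o ih =>
      obtain ⟨N, hN⟩ := ih
      exact ⟨N.wkO o, fun η => by rw [Term.wkO_sem, hN]⟩

def Split.allR : (G : Ctx) → Σ' G1, Split G G1 G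
  | [] => ⟨[], .nil⟩
  | some A :: G => ⟨none :: (allR G).1, .right (allR G).2⟩
  | none :: G => ⟨none :: (allR G).1, .skip (allR G).2⟩

theorem Split.allR_sub2 : (G : Ctx) → (η : CtxSem G) → (allR G).2.sub2 η = η
  | [], _ => rfl
  | some _ :: G, η => by
      show (η.1, (allR G).2.sub2 η.2) = η
      rw [allR_sub2 G η.2]
      rfl
  | none :: G, η => allR_sub2 G η
/-! ## Realizable iteration counts -/

/-- The type `(A ⊗ L(1)) ⊸ (A ⊗ L(1))`. -/
def HT (A : Tp) : Tp := .arr (.tens A unitL) (.tens A unitL)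

/-- The type `L(1) ⊗ ((A ⊗ L(1)) ⊸ (A ⊗ L(1)))`. -/
def RT (A : Tp) : Tp := .tens unitL (HT A)

/-- `Good f g` says: there is a closed term which, given `n : L(1)`, returns `n`
together with the `g |n|`-fold iterate of `f`. -/
def Good {A : Tp} (f : Term [] (HT A)) (g : ℕ → ℕ) : Prop :=
  ∃ G : Term [] (.arr unitL (RT A)),
    ∀ n : List Unit,
      G.sem PUnit.unit n = (n, fun z => (f.sem PUnit.unit)^[g n.length] z)

theorem good_zero {A : Tp} (f : Term [] (HT A)) : Good f (fun _ => 0) := by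
  refine ⟨.lam (.pair (.left .nil) (.var .here) (.lam (.var .here))), fun n => ?_⟩
  simp only [Term.sem, Lk.sem, Split.sub1, Split.sub2, Function.iterate_zero]
  rfl

theorem good_one {A : Tp} (f : Term [] (HT A)) : Good f (fun _ => 1) := by
  obtain ⟨Wf, hWf⟩ := exists_wk f [none]
  refine ⟨.lam (.pair (.left .nil) (.var .here) Wf), fun n => ?_⟩
  simp only [Term.sem, Lk.sem, Split.sub1, Split.sub2, hWf, Function.iterate_one]
  erw [hWf]
  rfl

theorem good_add {A : Tp} (f : Term [] (HT A)) {g1 g2 : ℕ → ℕ}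
    (h1 : Good f g1) (h2 : Good f g2) : Good f (fun k => g1 k + g2 k) := by
  obtain ⟨G1, hG1⟩ := h1
  obtain ⟨G2, hG2⟩ := h2
  obtain ⟨W1, hW1⟩ := exists_wk G1 [none]
  obtain ⟨W2, hW2⟩ := exists_wk G2 [none, none, none]
  refine ⟨.lam (.letp (.left .nil) (.app (.right .nil) W1 (.var .here))
    (.letp (.right (.left (.skip .nil)))
      (.app (.skip (.right (.skip .nil))) W2 (.var (.there .here)))
      (.pair (.right (.left (.right (.skip (.skip .nil)))))
        (.var (.there .here))
        (.lam (.app (.right (.left (.skip (.right (.skip (.skip .nil))))))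
          (.var (.there .here))
          (.app (.right (.skip (.skip (.left (.skip (.skip .nil))))))
            (.var (.there (.there (.there .here)))) (.var .here))))))), fun n => ?_⟩
  simp only [Term.sem, Lk.sem, Split.sub1, Split.sub2, hW1, hW2, hG1, hG2]
  erw [hW1, hG1, hW2, hG2]
  refine Prod.ext rfl ?_
  funext z
  simp only []
  rw [add_comm (g1 n.length)]
  exact (Function.iterate_add_apply (f.sem PUnit.unit) (g2 n.length) (g1 n.length) z).symm

theorem good_sum {A : Tp} (f : Term [] (HT A)) {g : ℕ → ℕ} (h : Good f g) :
    Good f (fun k => ∑ i ∈ Finset.range k, g i) := by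
  obtain ⟨G, hG⟩ := h
  obtain ⟨W, hW⟩ := exists_wk G [none, none, none, none, none]
  set F := f.sem PUnit.unit with hF
  set Sg : ℕ → ℕ := fun k => ∑ i ∈ Finset.range k, g i with hSg
  set N2T : Term [some (RT A), some .unit, some .dia] (RT A) :=
    .letp (.left (.right (.right .nil))) (.var .here)
      (.letp (.right (.left (.skip (.right (.right .nil)))))
        (.app (.skip (.right (.skip (.skip (.skip .nil))))) W (.var (.there .here)))
        (.pair (.right (.left (.right (.skip (.skip (.right (.left .nil)))))))
          (.cons (.skip (.right (.skip (.skip (.skip (.skip (.left .nil)))))))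
            (.skip (.right (.skip (.skip (.skip (.skip (.skip .nil)))))))
            (.var (.there (.there (.there (.there (.there (.there .here)))))))
            .null
            (.var (.there .here)))
          (.lam (.app (.right (.left (.skip (.right (.skip (.skip (.right (.skip .nil))))))))
            (.var (.there .here))
            (.app (.right (.skip (.skip (.left (.skip (.skip (.right (.skip .nil))))))))
              (.var (.there (.there (.there .here)))) (.var .here))))))
    with hN2T
  refine ⟨.lam (.lrec (.left .nil) (.var .here)
    (.pair (.skip .nil) .nil (.lam (.var .here))) N2T), fun n => ?_⟩
  have key : ∀ t : List Unit,
      t.foldr (fun a b => N2T.sem (b, (a, ((), PUnit.unit))))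
        (([] : List Unit), (fun z : A.sem × List Unit => z))
      = (t, (fun z => F^[Sg t.length] z)) := by
    intro t
    induction t with
    | nil =>
        refine Prod.ext rfl ?_
        funext z
        simp [hSg]
        rfl
    | cons u t ih =>
        erw [List.foldr_cons, ih]
        simp only [hN2T, Term.sem, Lk.sem, Split.sub1, Split.sub2, hW, hG]
        erw [hW, hG]
        refine Prod.ext rfl ?_
        funext z
        simp only [List.length_cons, hSg]
        rw [Finset.sum_range_succ, add_comm]
        exact (Function.iterate_add_apply F (g t.length) (∑ x ∈ Finset.range t.length, g x) z).symm
  exact key n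
theorem Good.congr {A : Tp} {f : Term [] (HT A)} {g1 g2 : ℕ → ℕ}
    (h : Good f g1) (e : ∀ k, g1 k = g2 k) : Good f g2 := by
  obtain ⟨G, hG⟩ := h
  exact ⟨G, fun n => by rw [hG, e]⟩

theorem good_const {A : Tp} (f : Term [] (HT A)) (c : ℕ) : Good f (fun _ => c) := by
  induction c with
  | zero => exact good_zero f
  | succ c ih => exact (good_add f ih (good_one f)).congr (fun k => rfl)

theorem good_smul {A : Tp} (f : Term [] (HT A)) {g : ℕ → ℕ} (c : ℕ) (h : Good f g) :
    Good f (fun k => c * g k) := by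
  induction c with
  | zero => exact (good_zero f).congr (by simp)
  | succ c ih => exact (good_add f ih h).congr (fun k => by ring)

theorem good_finsum {A : Tp} (f : Term [] (HT A)) {ι : Type} (s : Finset ι)
    (g : ι → ℕ → ℕ) (h : ∀ i ∈ s, Good f (g i)) :
    Good f (fun k => ∑ i ∈ s, g i k) := by
  classical
  induction s using Finset.induction_on with
  | empty => exact (good_zero f).congr (by simp)
  | @insert a s ha ih =>
      refine (good_add f (h a (Finset.mem_insert_self a s))
        (ih (fun i hi => h i (Finset.mem_insert_of_mem hi)))).congr (fun k => ?_)
      rw [Finset.sum_insert ha]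

theorem aux_pow (j k : ℕ) :
    ∑ i ∈ Finset.range k, (∑ m ∈ Finset.range (j+1), (j+1).choose m * i^m)
      = k^(j+1) := by
  induction k with
  | zero => simp
  | succ k ih =>
      rw [Finset.sum_range_succ, ih]
      have key : (k+1)^(j+1)
          = (∑ m ∈ Finset.range (j+1), k ^ m * 1 ^ (j + 1 - m) * (j+1).choose m)
            + k^(j+1) := by
        rw [add_pow, Finset.sum_range_succ]
        simp [Nat.choose_self]
      rw [key]
      rw [add_comm]
      congr 1
      refine Finset.sum_congr rfl fun m _ => by ring

theorem good_pow {A : Tp} (f : Term [] (HT A)) (j : ℕ) : Good f (fun k => k ^ j) := by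
  induction j using Nat.strong_induction_on with
  | _ j ih =>
      match j with
      | 0 => exact (good_const f 1).congr (by simp)
      | j + 1 =>
          have hg : Good f (fun i => ∑ m ∈ Finset.range (j+1), (j+1).choose m * i^m) :=
            good_finsum f (Finset.range (j+1)) _
              (fun m hm => good_smul f ((j+1).choose m)
                (ih m (Finset.mem_range.mp hm)))
          exact (good_sum f hg).congr (fun k => aux_pow j k)

theorem good_poly {A : Tp} (f : Term [] (HT A)) (P : Polynomial ℕ) :
    Good f (fun k => P.eval k) := by
  induction P using Polynomial.induction_on' with
  | add p q hp hq => exact (good_add f hp hq).congr (fun k => by simp)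
  | monomial n a =>
      exact (good_smul f a (good_pow f n)).congr
        (fun k => by simp [Polynomial.eval_monomial])

/-- **Polynomial iteration in LFPL**: for every closed term
`f : (A ⊗ L(1)) ⊸ (A ⊗ L(1))` and polynomial `P : ℕ → ℕ` with natural-number
coefficients there is a closed term `f♯P` of the same type whose denotation
iterates the denotation of `f` exactly `P(|n|)` times starting from `(x, n)`. -/
theorem polynomial_iteration {A : Tp}
    (f : Term [] (.arr (.tens A unitL) (.tens A unitL))) (P : Polynomial ℕ) :
    ∃ fsP : Term [] (.arr (.tens A unitL) (.tens A unitL)),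
      ∀ (x : A.sem) (n : List Unit),
        fsP.sem PUnit.unit (x, n) = (f.sem PUnit.unit)^[P.eval n.length] (x, n) := by
  obtain ⟨G, hG⟩ := good_poly f P
  obtain ⟨W, hW⟩ := exists_wk G [none, none, none]
  refine ⟨.lam (.letp (.left .nil) (.var .here)
    (.letp (.left (.right (.skip .nil)))
      (.app (.right (.skip (.skip .nil))) W (.var .here))
      (.app (.left (.right (.skip (.right (.skip .nil)))))
        (.var .here)
        (.pair (.skip (.right (.skip (.left (.skip .nil)))))
          (.var (.there (.there (.there .here))))
          (.var (.there .here)))))), fun x n => ?_⟩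
  simp only [Term.sem, Lk.sem, Split.sub1, Split.sub2, hW, hG]
  erw [hW, hG]
  rfl
end

section
/- Definability of elements of diamond-free types: suppose A is a diamond-free LFPL type. Then for every element a ∈ ⟦A⟧ there exists a closed LFPL term M_a : A such that ⟦M_a⟧ under the empty environment equals a. -/
/-- **Definability of elements of diamond-free types**: if `A` is diamond-free,
then every element `a ∈ ⟦A⟧` is the denotation of some closed term `M_a : A`. -/
theorem dfree_element_definable {A : Tp} (hA : DFree A) (a : A.sem) :
    ∃ M : Term [] A, M.sem PUnit.unit = a := by
  induction hA with
  | unit => exact ⟨.null, rfl⟩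
  | sum h1 h2 ih1 ih2 =>
    cases a with
    | inl x =>
      obtain ⟨M, hM⟩ := ih1 x
      exact ⟨.inj1 M, by simp [Term.sem, hM]; rfl⟩
    | inr y =>
      obtain ⟨M, hM⟩ := ih2 y
      exact ⟨.inj2 M, by simp [Term.sem, hM]; rfl⟩
  | tens h1 h2 ih1 ih2 =>
    obtain ⟨M1, hM1⟩ := ih1 a.1
    obtain ⟨M2, hM2⟩ := ih2 a.2
    exact ⟨.pair .nil M1 M2, by simp [Term.sem, Split.sub1, Split.sub2, hM1, hM2]; rfl⟩
end
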